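/- arXiv:2310.12739 — 5 statements merged into one kernel-verified Lean document; each statement's English description precedes it below -/
import Mathlib

section
/- Let F₁₀, F₂₀, F₁N, F₂N and α₁, α₂, β₁, β₂, τ₁₁, τ₁₂, τ₂₁, τ₂₂ be real numbers, and define BT = F₁₀F₂₀ − F₁NF₂N − τ₁₁F₂₀(α₁F₁₀ + α₂F₂₀) − τ₁₂F₂N(β₁F₁N − β₂F₂N) − τ₂₁F₁₀(α₁F₁₀ + α₂F₂₀) − τ₂₂F₁N(β₁F₁N − β₂F₂N). Then: (i) if α₁ = 0, α₂ > 0, β₁ = 0, β₂ > 0 and τ₁₁ ≥ 0, τ₂₁ = 1/α₂, τ₁₂ ≤ 0, τ₂₂ = 1/β₂, then BT ≤ 0; (ii) if α₁ > 0, α₂ ≥ 0, β₁ > 0, β₂ ≥ 0 and τ₁₁ = 1/α₁, τ₂₁ = 0, τ₁₂ = −1/β₁, τ₂₂ = 0, then BT ≤ 0. -/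
/-- The stable-penalty lemma: with the boundary term
`BT = F₁₀F₂₀ − F₁NF₂N − τ₁₁F₂₀(α₁F₁₀ + α₂F₂₀) − τ₁₂F₂N(β₁F₁N − β₂F₂N)
      − τ₂₁F₁₀(α₁F₁₀ + α₂F₂₀) − τ₂₂F₁N(β₁F₁N − β₂F₂N)`,
either choice of penalty parameters makes `BT ≤ 0`. -/
theorem stmt10 (F₁₀ F₂₀ F₁N F₂N α₁ α₂ β₁ β₂ τ₁₁ τ₁₂ τ₂₁ τ₂₂ BT : ℝ)
    (hBT : BT = F₁₀*F₂₀ - F₁N*F₂N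
      - τ₁₁*F₂₀*(α₁*F₁₀ + α₂*F₂₀) - τ₁₂*F₂N*(β₁*F₁N - β₂*F₂N)
      - τ₂₁*F₁₀*(α₁*F₁₀ + α₂*F₂₀) - τ₂₂*F₁N*(β₁*F₁N - β₂*F₂N)) :
    ((α₁ = 0 ∧ 0 < α₂ ∧ β₁ = 0 ∧ 0 < β₂ ∧
        0 ≤ τ₁₁ ∧ τ₂₁ = 1/α₂ ∧ τ₁₂ ≤ 0 ∧ τ₂₂ = 1/β₂) → BT ≤ 0) ∧
    ((0 < α₁ ∧ 0 ≤ α₂ ∧ 0 < β₁ ∧ 0 ≤ β₂ ∧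
        τ₁₁ = 1/α₁ ∧ τ₂₁ = 0 ∧ τ₁₂ = -1/β₁ ∧ τ₂₂ = 0) → BT ≤ 0) := by
  constructor
  · rintro ⟨h1, h2, h3, h4, h5, h6, h7, h8⟩
    subst h1 h3 h6 h8
    have hα : α₂ ≠ 0 := ne_of_gt h2
    have hβ : β₂ ≠ 0 := ne_of_gt h4
    have : BT = -(τ₁₁*α₂*F₂₀^2) + τ₁₂*β₂*F₂N^2 := by
      rw [hBT]; field_simp; ring
    rw [this]
    have h9 : τ₁₂*β₂*F₂N^2 ≤ 0 :=
      mul_nonpos_of_nonpos_of_nonneg (mul_nonpos_of_nonpos_of_nonneg h7 h4.le) (sq_nonneg _)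
    nlinarith [mul_nonneg (mul_nonneg h5 h2.le) (sq_nonneg F₂₀)]
  · rintro ⟨h1, h2, h3, h4, h5, h6, h7, h8⟩
    subst h5 h6 h7 h8
    have hα : α₁ ≠ 0 := ne_of_gt h1
    have hβ : β₁ ≠ 0 := ne_of_gt h3
    have : BT = -((α₂/α₁)*F₂₀^2) - (β₂/β₁)*F₂N^2 := by
      rw [hBT]; field_simp; ring
    rw [this]
    have h9 : 0 ≤ (α₂/α₁)*F₂₀^2 := mul_nonneg (div_nonneg h2 h1.le) (sq_nonneg _)
    have h10 : 0 ≤ (β₂/β₁)*F₂N^2 := mul_nonneg (div_nonneg h4 h3.le) (sq_nonneg _)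
    linarith
end

section
/- Let n ≥ 1, let p : Fin (n+1) → ℝ satisfy pⱼ > 0 for all j, and let D₊, D₋ be (n+1)×(n+1) real matrices satisfying the dual-pairing SBP property: for all f, g ∈ ℝ^{n+1}, Σⱼ gⱼ pⱼ (D₊f)ⱼ + Σⱼ fⱼ pⱼ (D₋g)ⱼ = fₙgₙ − f₀g₀. Let g, U, H ∈ ℝ with g > 0, H > 0, U² < gH, and let α₁, α₂, β₁, β₂, τ₁₁, τ₁₂, τ₂₁, τ₂₂ be constants satisfying either case (i) or case (ii) of the stable-penalty lemma. Let h, u : ℝ → ℝ^{n+1} be differentiable and satisfy for all t: h'(t) = −D₊F₁(t) + S₁(t) and u'(t) = −D₋F₂(t) + S₂(t), where F₁ = U·h + H·u, F₂ = g·h + U·u, S₁(t)ⱼ = −τ₁₁ p₀⁻¹ (α₁F₁(t)₀ + α₂F₂(t)₀) if j = 0, −τ₁₂ pₙ⁻¹ (β₁F₁(t)ₙ − β₂F₂(t)ₙ) if j = n, and 0 otherwise, and S₂ is the same with τ₂₁, τ₂₂ in place of τ₁₁, τ₁₂. Then the discrete energy E(t) = Σⱼ pⱼ (g h(t)ⱼ²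 + 2U h(t)ⱼ u(t)ⱼ + H u(t)ⱼ²) is nonincreasing: E(t) ≤ E(s) for all 0 ≤ s ≤ t. -/
open Matrix Finset

set_option maxHeartbeats 1000000

/-- Strong stability of the dual-pairing SBP-SAT semi-discrete approximation of the
linear vector-invariant shallow water equations: under the dual-pairing SBP property,
subcritical mean flow, and stable penalty parameters, the discrete weighted energy
`E(t) = Σⱼ pⱼ (g hⱼ² + 2U hⱼuⱼ + H uⱼ²)` is nonincreasing. -/
theorem stmt12 (n : ℕ) (hn : 1 ≤ n)
    (p : Fin (n+1) → ℝ) (hp : ∀ j, 0 < p j)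
    (Dp Dm : Matrix (Fin (n+1)) (Fin (n+1)) ℝ)
    (hSBP : ∀ f g : Fin (n+1) → ℝ,
      (∑ j, g j * p j * (Dp *ᵥ f) j) + (∑ j, f j * p j * (Dm *ᵥ g) j)
        = f (Fin.last n) * g (Fin.last n) - f 0 * g 0)
    (g U H : ℝ) (hg : 0 < g) (hH : 0 < H) (hsub : U^2 < g*H)
    (α₁ α₂ β₁ β₂ τ₁₁ τ₁₂ τ₂₁ τ₂₂ : ℝ)
    (hpen :
      (α₁ = 0 ∧ 0 < α₂ ∧ β₁ = 0 ∧ 0 < β₂ ∧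
        0 ≤ τ₁₁ ∧ τ₂₁ = 1/α₂ ∧ τ₁₂ ≤ 0 ∧ τ₂₂ = 1/β₂) ∨
      (0 < α₁ ∧ 0 ≤ α₂ ∧ 0 < β₁ ∧ 0 ≤ β₂ ∧
        τ₁₁ = 1/α₁ ∧ τ₂₁ = 0 ∧ τ₁₂ = -1/β₁ ∧ τ₂₂ = 0))
    (h u F₁ F₂ S₁ S₂ : ℝ → Fin (n+1) → ℝ)
    (hF₁ : ∀ t j, F₁ t j = U * h t j + H * u t j)
    (hF₂ : ∀ t j, F₂ t j = g * h t j + U * u t j)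
    (hS₁ : ∀ t j, S₁ t j =
      if j = 0 then -τ₁₁ * (p 0)⁻¹ * (α₁ * F₁ t 0 + α₂ * F₂ t 0)
      else if j = Fin.last n then
        -τ₁₂ * (p (Fin.last n))⁻¹ * (β₁ * F₁ t (Fin.last n) - β₂ * F₂ t (Fin.last n))
      else 0)
    (hS₂ : ∀ t j, S₂ t j =
      if j = 0 then -τ₂₁ * (p 0)⁻¹ * (α₁ * F₁ t 0 + α₂ * F₂ t 0)
      else if j = Fin.last n then
        -τ₂₂ * (p (Fin.last n))⁻¹ * (β₁ * F₁ t (Fin.last n) - β₂ * F₂ t (Fin.last n))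
      else 0)
    (hh : ∀ t, HasDerivAt h (-(Dp *ᵥ F₁ t) + S₁ t) t)
    (hu : ∀ t, HasDerivAt u (-(Dm *ᵥ F₂ t) + S₂ t) t) :
    ∀ s t : ℝ, 0 ≤ s → s ≤ t →
      (∑ j, p j * (g * (h t j)^2 + 2*U*(h t j)*(u t j) + H*(u t j)^2))
        ≤ ∑ j, p j * (g * (h s j)^2 + 2*U*(h s j)*(u s j) + H*(u s j)^2) := by

  intro s t hs hst
  have hlastne : (Fin.last n) ≠ (0 : Fin (n+1)) := by
    simp [Fin.ext_iff]; omega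
  set hD : ℝ → Fin (n+1) → ℝ := fun τ => -(Dp *ᵥ F₁ τ) + S₁ τ with hDdef
  set uD : ℝ → Fin (n+1) → ℝ := fun τ => -(Dm *ᵥ F₂ τ) + S₂ τ with uDdef
  set E : ℝ → ℝ := fun τ => ∑ j, p j * (g * (h τ j)^2 + 2*U*(h τ j)*(u τ j) + H*(u τ j)^2)
    with Edef
  set E' : ℝ → ℝ := fun τ => ∑ j, p j * (g * (2*(h τ j)*(hD τ j))
      + 2*U*((hD τ j)*(u τ j) + (h τ j)*(uD τ j)) + H * (2*(u τ j)*(uD τ j))) with E'def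
  have hEderiv : ∀ τ, HasDerivAt E (E' τ) τ := by
    intro τ
    apply HasDerivAt.fun_sum
    intro j _
    have h1 : HasDerivAt (fun x => h x j) (hD τ j) τ := hasDerivAt_pi.mp (hh τ) j
    have h2 : HasDerivAt (fun x => u x j) (uD τ j) τ := hasDerivAt_pi.mp (hu τ) j
    have A := (h1.pow 2).const_mul g
    have B := (h1.const_mul (2*U)).mul h2
    have C := (h2.pow 2).const_mul H
    have := ((A.add B).add C).const_mul (p j)
    refine this.congr_deriv ?_
    push_cast; ring
  -- sum supported on endpoints
  have hsum2 : ∀ (f : Fin (n+1) → ℝ), (∀ j, j ≠ 0 → j ≠ Fin.last n → f j = 0) →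
      ∑ j, f j = f 0 + f (Fin.last n) := by
    intro f hf
    rw [← Finset.sum_subset (Finset.subset_univ ({0, Fin.last n} : Finset (Fin (n+1))))]
    · rw [Finset.sum_pair (Ne.symm hlastne)]
    · intro j _ hj
      simp only [Finset.mem_insert, Finset.mem_singleton, not_or] at hj
      exact hf j hj.1 hj.2
  have hE'le : ∀ τ, E' τ ≤ 0 := by
    intro τ
    set a := F₁ τ 0 with ha
    set b := F₂ τ 0 with hb
    set c := F₁ τ (Fin.last n) with hc
    set d := F₂ τ (Fin.last n) with hd
    have hp0 : p 0 ≠ 0 := (hp 0).ne'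
    have hpl : p (Fin.last n) ≠ 0 := (hp (Fin.last n)).ne'
    have hstep1 : E' τ = 2 * ((∑ j, F₂ τ j * p j * hD τ j) + (∑ j, F₁ τ j * p j * uD τ j)) := by
      simp only [E'def]
      rw [mul_add, Finset.mul_sum (Finset.univ) (fun j => F₂ τ j * p j * hD τ j) 2,
        Finset.mul_sum (Finset.univ) (fun j => F₁ τ j * p j * uD τ j) 2,
        ← Finset.sum_add_distrib]
      apply Finset.sum_congr rfl
      intro j _
      rw [hF₁ τ j, hF₂ τ j]
      ring
    have hS1sum : ∑ j, F₂ τ j * p j * S₁ τ j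
        = -(τ₁₁ * b) * (α₁ * a + α₂ * b) + -(τ₁₂ * d) * (β₁ * c - β₂ * d) := by
      rw [hsum2 _ (by intro j hj0 hjl; rw [hS₁ τ j, if_neg hj0, if_neg hjl]; ring)]
      rw [hS₁ τ 0, hS₁ τ (Fin.last n), if_pos rfl, if_neg hlastne, if_pos rfl]
      field_simp
      ring
    have hS2sum : ∑ j, F₁ τ j * p j * S₂ τ j
        = -(τ₂₁ * a) * (α₁ * a + α₂ * b) + -(τ₂₂ * c) * (β₁ * c - β₂ * d) := by
      rw [hsum2 _ (by intro j hj0 hjl; rw [hS₂ τ j, if_neg hj0, if_neg hjl]; ring)]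
      rw [hS₂ τ 0, hS₂ τ (Fin.last n), if_pos rfl, if_neg hlastne, if_pos rfl]
      field_simp
      ring
    have hsbp := hSBP (F₁ τ) (F₂ τ)
    have hstep2 : E' τ = 2 * (-(c * d - a * b)
        + (-(τ₁₁ * b) * (α₁ * a + α₂ * b) + -(τ₁₂ * d) * (β₁ * c - β₂ * d))
        + (-(τ₂₁ * a) * (α₁ * a + α₂ * b) + -(τ₂₂ * c) * (β₁ * c - β₂ * d))) := by
      rw [hstep1, ← hS1sum, ← hS2sum]
      congr 1
      have e1 : ∑ j, F₂ τ j * p j * hD τ j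
          = -(∑ j, F₂ τ j * p j * (Dp *ᵥ F₁ τ) j) + ∑ j, F₂ τ j * p j * S₁ τ j := by
        rw [← Finset.sum_neg_distrib, ← Finset.sum_add_distrib]
        apply Finset.sum_congr rfl; intro j _
        simp only [hDdef, Pi.add_apply, Pi.neg_apply]
        ring
      have e2 : ∑ j, F₁ τ j * p j * uD τ j
          = -(∑ j, F₁ τ j * p j * (Dm *ᵥ F₂ τ) j) + ∑ j, F₁ τ j * p j * S₂ τ j := by
        rw [← Finset.sum_neg_distrib, ← Finset.sum_add_distrib]
        apply Finset.sum_congr rfl; intro j _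
        simp only [uDdef, Pi.add_apply, Pi.neg_apply]
        ring
      rw [e1, e2]
      rw [← ha, ← hb, ← hc, ← hd] at hsbp
      linarith
    rw [hstep2]
    rcases hpen with ⟨h1, h2, h3, h4, h5, h6, h7, h8⟩ | ⟨h1, h2, h3, h4, h5, h6, h7, h8⟩
    · subst h1 h3 h6 h8
      have key : 2 * (-(c * d - a * b)
          + (-(τ₁₁ * b) * (0 * a + α₂ * b) + -(τ₁₂ * d) * (0 * c - β₂ * d))
          + (-(1/α₂ * a) * (0 * a + α₂ * b) + -(1/β₂ * c) * (0 * c - β₂ * d)))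
          = -2 * (τ₁₁ * α₂) * b^2 + 2 * (τ₁₂ * β₂) * d^2 := by
        field_simp
        ring
      rw [key]
      nlinarith [mul_nonneg (mul_nonneg h5 h2.le) (sq_nonneg b),
        mul_nonneg (neg_nonneg.mpr h7) (mul_nonneg h4.le (sq_nonneg d))]
    · subst h5 h6 h7 h8
      have key : 2 * (-(c * d - a * b)
          + (-(1/α₁ * b) * (α₁ * a + α₂ * b) + -(-1/β₁ * d) * (β₁ * c - β₂ * d))
          + (-(0 * a) * (α₁ * a + α₂ * b) + -(0 * c) * (β₁ * c - β₂ * d)))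
          = -2 * (α₂/α₁) * b^2 - 2 * (β₂/β₁) * d^2 := by
        field_simp
        ring
      rw [key]
      have q1 : 0 ≤ α₂/α₁ := div_nonneg h2 h1.le
      have q2 : 0 ≤ β₂/β₁ := div_nonneg h4 h3.le
      nlinarith [sq_nonneg b, sq_nonneg d]
  have hanti : Antitone E := by
    apply antitone_of_deriv_nonpos
    · exact fun x => (hEderiv x).differentiableAt
    · intro x
      rw [(hEderiv x).deriv]
      exact hE'le x
  exact hanti hst
end

section
/- Let n ≥ 1, let p : Fin (n+1) → ℝ satisfy pⱼ > 0 for all j, and let D₊, D₋ be (n+1)×(n+1) real matrices satisfying the dual-pairing SBP property: for all f, g ∈ ℝ^{n+1}, Σⱼ gⱼ pⱼ (D₊f)ⱼ + Σⱼ fⱼ pⱼ (D₋g)ⱼ = fₙgₙ − f₀g₀. Let g > 0 and let α₁, α₂, β₁, β₂, τ₁₁, τ₁₂, τ₂₁, τ₂₂ be constants satisfying either case (i) or case (ii) of the stable-penalty lemma. Let h, u : ℝ → ℝ^{n+1} be differentiable and satisfy for all t: h'(t) = −D₊F₁(t) + S₁(t) and u'(t) = −D₋F₂(t) + S₂(t),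 where F₁(t)ⱼ = u(t)ⱼ·h(t)ⱼ, F₂(t)ⱼ = u(t)ⱼ²/2 + g·h(t)ⱼ, S₁(t)ⱼ = −τ₁₁ p₀⁻¹ (α₁F₁(t)₀ + α₂F₂(t)₀) if j = 0, −τ₁₂ pₙ⁻¹ (β₁F₁(t)ₙ − β₂F₂(t)ₙ) if j = n, and 0 otherwise, and S₂ is the same with τ₂₁, τ₂₂ in place of τ₁₁, τ₁₂. Then the discrete energy E(t) = Σⱼ pⱼ (g h(t)ⱼ² + h(t)ⱼ u(t)ⱼ²) is nonincreasing: E(t) ≤ E(s) for all 0 ≤ s ≤ t. -/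
open Matrix Finset

/-- Strong (entropy) stability of the dual-pairing SBP-SAT semi-discrete approximation
of the nonlinear vector-invariant shallow water equations: under the dual-pairing SBP
property and stable penalty parameters, the discrete energy/entropy
`E(t) = Σⱼ pⱼ (g hⱼ² + hⱼuⱼ²)` is nonincreasing. -/
theorem stmt13 (n : ℕ) (hn : 1 ≤ n)
    (p : Fin (n+1) → ℝ) (hp : ∀ j, 0 < p j)
    (Dp Dm : Matrix (Fin (n+1)) (Fin (n+1)) ℝ)
    (hSBP : ∀ f g : Fin (n+1) → ℝ,
      (∑ j, g j * p j * (Dp *ᵥ f) j) + (∑ j, f j * p j * (Dm *ᵥ g) j)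
        = f (Fin.last n) * g (Fin.last n) - f 0 * g 0)
    (g : ℝ) (hg : 0 < g)
    (α₁ α₂ β₁ β₂ τ₁₁ τ₁₂ τ₂₁ τ₂₂ : ℝ)
    (hpen :
      (α₁ = 0 ∧ 0 < α₂ ∧ β₁ = 0 ∧ 0 < β₂ ∧
        0 ≤ τ₁₁ ∧ τ₂₁ = 1/α₂ ∧ τ₁₂ ≤ 0 ∧ τ₂₂ = 1/β₂) ∨
      (0 < α₁ ∧ 0 ≤ α₂ ∧ 0 < β₁ ∧ 0 ≤ β₂ ∧
        τ₁₁ = 1/α₁ ∧ τ₂₁ = 0 ∧ τ₁₂ = -1/β₁ ∧ τ₂₂ = 0))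
    (h u F₁ F₂ S₁ S₂ : ℝ → Fin (n+1) → ℝ)
    (hF₁ : ∀ t j, F₁ t j = u t j * h t j)
    (hF₂ : ∀ t j, F₂ t j = (u t j)^2 / 2 + g * h t j)
    (hS₁ : ∀ t j, S₁ t j =
      if j = 0 then -τ₁₁ * (p 0)⁻¹ * (α₁ * F₁ t 0 + α₂ * F₂ t 0)
      else if j = Fin.last n then
        -τ₁₂ * (p (Fin.last n))⁻¹ * (β₁ * F₁ t (Fin.last n) - β₂ * F₂ t (Fin.last n))
      else 0)
    (hS₂ : ∀ t j, S₂ t j =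
      if j = 0 then -τ₂₁ * (p 0)⁻¹ * (α₁ * F₁ t 0 + α₂ * F₂ t 0)
      else if j = Fin.last n then
        -τ₂₂ * (p (Fin.last n))⁻¹ * (β₁ * F₁ t (Fin.last n) - β₂ * F₂ t (Fin.last n))
      else 0)
    (hh : ∀ t, HasDerivAt h (-(Dp *ᵥ F₁ t) + S₁ t) t)
    (hu : ∀ t, HasDerivAt u (-(Dm *ᵥ F₂ t) + S₂ t) t) :
    ∀ s t : ℝ, 0 ≤ s → s ≤ t →
      (∑ j, p j * (g * (h t j)^2 + (h t j)*(u t j)^2))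
        ≤ ∑ j, p j * (g * (h s j)^2 + (h s j)*(u s j)^2) := by
  intro s t hs hst
  clear hs
  set hd : ℝ → Fin (n+1) → ℝ := fun x => -(Dp *ᵥ F₁ x) + S₁ x with hhd
  set ud : ℝ → Fin (n+1) → ℝ := fun x => -(Dm *ᵥ F₂ x) + S₂ x with hud
  have hh' : ∀ x j, HasDerivAt (fun τ => h τ j) (hd x j) x :=
    fun x j => hasDerivAt_pi.mp (hh x) j
  have hu' : ∀ x j, HasDerivAt (fun τ => u τ j) (ud x j) x :=
    fun x j => hasDerivAt_pi.mp (hu x) j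
  set E : ℝ → ℝ := fun τ => ∑ j, p j * (g * (h τ j)^2 + (h τ j)*(u τ j)^2) with hE
  suffices hA : Antitone E from hA hst
  -- derivative of E
  have hder : ∀ x, HasDerivAt E
      (∑ j, p j * (g * (2 * h x j * hd x j)
        + (hd x j * (u x j)^2 + h x j * (2 * u x j * ud x j)))) x := by
    intro x
    apply HasDerivAt.fun_sum
    intro j _
    have h1 : HasDerivAt (fun τ => (h τ j)^2) (2 * h x j * hd x j) x := by
      have := (hh' x j).fun_pow 2
      simpa [pow_one] using this
    have h2 : HasDerivAt (fun τ => (u τ j)^2) (2 * u x j * ud x j) x := by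
      have := (hu' x j).fun_pow 2
      simpa [pow_one] using this
    exact ((h1.const_mul g).add ((hh' x j).mul h2)).const_mul (p j)
  have hdiff : Differentiable ℝ E := fun x => (hder x).differentiableAt
  apply antitone_of_deriv_nonpos hdiff
  intro x
  rw [(hder x).deriv]
  -- rewrite the derivative sum as 2*(F₂ᵀP hd + F₁ᵀP ud)
  have hsum :
      (∑ j, p j * (g * (2 * h x j * hd x j)
        + (hd x j * (u x j)^2 + h x j * (2 * u x j * ud x j))))
      = 2 * ((∑ j, F₂ x j * p j * hd x j) + (∑ j, F₁ x j * p j * ud x j)) := by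
    rw [mul_add, Finset.mul_sum, Finset.mul_sum, ← Finset.sum_add_distrib]
    apply Finset.sum_congr rfl
    intro j _
    rw [hF₁, hF₂]; ring
  rw [hsum]
  -- split hd, ud into volume and SAT parts
  have hsplit1 : (∑ j, F₂ x j * p j * hd x j)
      = -(∑ j, F₂ x j * p j * (Dp *ᵥ F₁ x) j) + ∑ j, F₂ x j * p j * S₁ x j := by
    rw [← Finset.sum_neg_distrib, ← Finset.sum_add_distrib]
    apply Finset.sum_congr rfl; intro j _
    simp [hhd]; ring
  have hsplit2 : (∑ j, F₁ x j * p j * ud x j)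
      = -(∑ j, F₁ x j * p j * (Dm *ᵥ F₂ x) j) + ∑ j, F₁ x j * p j * S₂ x j := by
    rw [← Finset.sum_neg_distrib, ← Finset.sum_add_distrib]
    apply Finset.sum_congr rfl; intro j _
    simp [hud]; ring
  have hsbp := hSBP (F₁ x) (F₂ x)
  set a := F₁ x 0 with ha
  set b := F₂ x 0 with hb
  set c := F₁ x (Fin.last n) with hc
  set d := F₂ x (Fin.last n) with hdd
  -- boundary sum
  have h0ne : (0 : Fin (n+1)) ≠ Fin.last n := by
    intro heq
    have := congrArg Fin.val heq
    simp [Fin.val_last] at this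
    omega
  have hbd : (∑ j, F₂ x j * p j * S₁ x j) + (∑ j, F₁ x j * p j * S₂ x j)
      = -(τ₁₁ * b + τ₂₁ * a) * (α₁ * a + α₂ * b)
        - (τ₁₂ * d + τ₂₂ * c) * (β₁ * c - β₂ * d) := by
    rw [← Finset.sum_add_distrib]
    have hsub : ({0, Fin.last n} : Finset (Fin (n+1))) ⊆ Finset.univ :=
      Finset.subset_univ _
    rw [← Finset.sum_subset hsub]
    · rw [Finset.sum_pair h0ne]
      rw [hS₁ x 0, hS₁ x (Fin.last n), hS₂ x 0, hS₂ x (Fin.last n)]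
      rw [if_pos rfl, if_pos rfl, if_neg h0ne.symm, if_neg h0ne.symm, if_pos rfl, if_pos rfl]
      have hp0 : p 0 ≠ 0 := (hp 0).ne'
      have hpn : p (Fin.last n) ≠ 0 := (hp (Fin.last n)).ne'
      field_simp
      ring
    · intro j _ hj
      simp only [Finset.mem_insert, Finset.mem_singleton, not_or] at hj
      rw [hS₁ x j, hS₂ x j, if_neg hj.1, if_neg hj.2, if_neg hj.1, if_neg hj.2]
      ring
  have key : 2 * ((∑ j, F₂ x j * p j * hd x j) + (∑ j, F₁ x j * p j * ud x j))
      = 2 * (-(c * d - a * b)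
        + (-(τ₁₁ * b + τ₂₁ * a) * (α₁ * a + α₂ * b)
          - (τ₁₂ * d + τ₂₂ * c) * (β₁ * c - β₂ * d))) := by
    rw [hsplit1, hsplit2]
    have : (∑ j, F₂ x j * p j * (Dp *ᵥ F₁ x) j) + (∑ j, F₁ x j * p j * (Dm *ᵥ F₂ x) j)
        = c * d - a * b := hsbp
    rw [← hbd]
    linear_combination (-2 : ℝ) * this
  rw [key]
  rcases hpen with ⟨hA1, hA2, hB1, hB2, hT11, hT21, hT12, hT22⟩ |
    ⟨hA1, hA2, hB1, hB2, hT11, hT21, hT12, hT22⟩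
  · subst hA1 hB1 hT21 hT22
    have hα : α₂ ≠ 0 := hA2.ne'
    have hβ : β₂ ≠ 0 := hB2.ne'
    have k1 : 0 ≤ τ₁₁ * α₂ * b^2 :=
      mul_nonneg (mul_nonneg hT11 hA2.le) (sq_nonneg b)
    have k2 : τ₁₂ * β₂ * d^2 ≤ 0 :=
      mul_nonpos_of_nonpos_of_nonneg (mul_nonpos_of_nonpos_of_nonneg hT12 hB2.le) (sq_nonneg d)
    have hexp : 2 * (-(c * d - a * b)
        + (-(τ₁₁ * b + 1/α₂ * a) * (0 * a + α₂ * b)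
          - (τ₁₂ * d + 1/β₂ * c) * (0 * c - β₂ * d)))
        = -(2 * (τ₁₁ * α₂ * b^2)) + 2 * (τ₁₂ * β₂ * d^2) := by
      field_simp
      ring
    linarith [hexp, k1, k2]
  · subst hT11 hT21 hT12 hT22
    have hα : α₁ ≠ 0 := hA1.ne'
    have hβ : β₁ ≠ 0 := hB1.ne'
    have k1 : 0 ≤ 1/α₁ * α₂ * b^2 :=
      mul_nonneg (mul_nonneg (by positivity) hA2) (sq_nonneg b)
    have k2 : 0 ≤ 1/β₁ * β₂ * d^2 :=
      mul_nonneg (mul_nonneg (by positivity) hB2) (sq_nonneg d)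
    have hexp : 2 * (-(c * d - a * b)
        + (-(1/α₁ * b + 0 * a) * (α₁ * a + α₂ * b)
          - (-1/β₁ * d + 0 * c) * (β₁ * c - β₂ * d)))
        = -(2 * (1/α₁ * α₂ * b^2)) - 2 * (1/β₁ * β₂ * d^2) := by
      field_simp
      ring
    linarith [hexp, k1, k2]
end

section
/- Let ι be a finite index type, let Dpx, Dpy, Dmx, Dmy be ι×ι real matrices with Dmx = −Dpxᵀ and Dmy = −Dpyᵀ, let g ∈ ℝ and f : ι → ℝ. Let h, u, v : ℝ → (ι → ℝ) be differentiable and, writing ∘ for the entrywise product of vectors, K(t) = (u(t)∘u(t) + v(t)∘v(t))/2 + g·h(t) and ω(t) = Dmx(v(t)) − Dmy(u(t)) + f, suppose that for all t: h'(t) = −Dpx(u(t)∘h(t)) − Dpy(v(t)∘h(t)), u'(t) = ω(t)∘v(t) − Dmx(K(t)), and v'(t) = −ω(t)∘u(t) − Dmy(K(t)). Then the total discrete energy E(t) = Σⱼ ( g·h(t)ⱼ² + h(t)ⱼ·u(t)ⱼ² + h(t)ⱼ·v(t)ⱼ² ) is constant in t. -/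
open Matrix Finset

/-- Exact semi-discrete energy conservation for the dual-pairing SBP approximation of
the 2D rotating vector-invariant shallow water equations on a doubly periodic grid:
with `Dmx = −Dpxᵀ`, `Dmy = −Dpyᵀ`, Bernoulli function `K = (u∘u + v∘v)/2 + g h` and
absolute vorticity `ω = Dmx v − Dmy u + f`, the total energy
`E(t) = Σⱼ (g hⱼ² + hⱼuⱼ² + hⱼvⱼ²)` is constant in time. -/
theorem stmt15 {ι : Type*} [Fintype ι] [DecidableEq ι]
    (Dpx Dpy Dmx Dmy : Matrix ι ι ℝ)
    (hmx : Dmx = -Dpxᵀ) (hmy : Dmy = -Dpyᵀ)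
    (g : ℝ) (f : ι → ℝ)
    (h u v : ℝ → ι → ℝ) (K ω : ℝ → ι → ℝ)
    (hK : ∀ t, K t = (u t * u t + v t * v t) / 2 + g • h t)
    (hω : ∀ t, ω t = Dmx *ᵥ v t - Dmy *ᵥ u t + f)
    (hh : ∀ t, HasDerivAt h (-(Dpx *ᵥ (u t * h t)) - Dpy *ᵥ (v t * h t)) t)
    (hu : ∀ t, HasDerivAt u (ω t * v t - Dmx *ᵥ K t) t)
    (hv : ∀ t, HasDerivAt v (-(ω t * u t) - Dmy *ᵥ K t) t) :
    ∀ t₁ t₂ : ℝ,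
      (∑ j, (g * (h t₁ j)^2 + h t₁ j * (u t₁ j)^2 + h t₁ j * (v t₁ j)^2))
        = ∑ j, (g * (h t₂ j)^2 + h t₂ j * (u t₂ j)^2 + h t₂ j * (v t₂ j)^2) := by
  set E : ℝ → ℝ := fun t => ∑ j, (g * (h t j)^2 + h t j * (u t j)^2 + h t j * (v t j)^2)
    with hE
  have key : ∀ t, HasDerivAt E 0 t := by
    intro t
    set h' : ι → ℝ := -(Dpx *ᵥ (u t * h t)) - Dpy *ᵥ (v t * h t) with hh'
    set u' : ι → ℝ := ω t * v t - Dmx *ᵥ K t with hu'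
    set v' : ι → ℝ := -(ω t * u t) - Dmy *ᵥ K t with hv'
    have Hh := hasDerivAt_pi.1 (hh t)
    have Hu := hasDerivAt_pi.1 (hu t)
    have Hv := hasDerivAt_pi.1 (hv t)
    have hd : ∀ j ∈ Finset.univ (α := ι), HasDerivAt
        (fun s => g * (h s j)^2 + h s j * (u s j)^2 + h s j * (v s j)^2)
        (g * (2 * h t j * h' j)
          + (h' j * (u t j)^2 + h t j * (2 * u t j * u' j))
          + (h' j * (v t j)^2 + h t j * (2 * v t j * v' j))) t := by
      intro j _
      have d1 : HasDerivAt (fun s => (h s j)^2) (h' j * h t j + h t j * h' j) t := by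
        have H := (Hh j).fun_mul (Hh j); rw [← hh'] at H; simpa [pow_two] using H
      have d2 : HasDerivAt (fun s => (u s j)^2) (u' j * u t j + u t j * u' j) t := by
        have H := (Hu j).fun_mul (Hu j); rw [← hu'] at H; simpa [pow_two] using H
      have d3 : HasDerivAt (fun s => (v s j)^2) (v' j * v t j + v t j * v' j) t := by
        have H := (Hv j).fun_mul (Hv j); rw [← hv'] at H; simpa [pow_two] using H
      have Hh' := Hh j; rw [← hh'] at Hh'
      have goal := ((d1.const_mul g).fun_add (Hh'.fun_mul d2)).fun_add (Hh'.fun_mul d3)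
      refine goal.congr_deriv ?_
      ring
    have hsum := HasDerivAt.fun_sum hd
    have hzero : (∑ j, (g * (2 * h t j * h' j)
          + (h' j * (u t j)^2 + h t j * (2 * u t j * u' j))
          + (h' j * (v t j)^2 + h t j * (2 * v t j * v' j)))) = 0 := by
      set a : ι → ℝ := u t * h t with ha
      set b : ι → ℝ := v t * h t with hb
      have step : ∀ j, g * (2 * h t j * h' j)
          + (h' j * (u t j)^2 + h t j * (2 * u t j * u' j))
          + (h' j * (v t j)^2 + h t j * (2 * v t j * v' j))
          = -2 * (K t j * (Dpx *ᵥ a) j + K t j * (Dpy *ᵥ b) j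
              + a j * (Dmx *ᵥ K t) j + b j * (Dmy *ᵥ K t) j) := by
        intro j
        have hKj : K t j = (u t j * u t j + v t j * v t j) / 2 + g * h t j := by
          rw [hK t]; simp [Pi.add_apply, Pi.smul_apply]
        simp only [hh', hu', hv', ha, hb, Pi.sub_apply, Pi.neg_apply, Pi.mul_apply]
        rw [hKj]; ring
      rw [Finset.sum_congr rfl (fun j _ => step j), ← Finset.mul_sum]
      have hdp : (∑ j, (K t j * (Dpx *ᵥ a) j + K t j * (Dpy *ᵥ b) j
            + a j * (Dmx *ᵥ K t) j + b j * (Dmy *ᵥ K t) j))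
          = K t ⬝ᵥ (Dpx *ᵥ a) + K t ⬝ᵥ (Dpy *ᵥ b)
            + a ⬝ᵥ (Dmx *ᵥ K t) + b ⬝ᵥ (Dmy *ᵥ K t) := by
        simp [dotProduct, Finset.sum_add_distrib]
      rw [hdp, hmx, hmy]
      have e1 : a ⬝ᵥ ((-Dpxᵀ) *ᵥ K t) = -((Dpx *ᵥ a) ⬝ᵥ K t) := by
        rw [Matrix.neg_mulVec, dotProduct_neg, Matrix.dotProduct_mulVec,
          Matrix.vecMul_transpose]
      have e2 : b ⬝ᵥ ((-Dpyᵀ) *ᵥ K t) = -((Dpy *ᵥ b) ⬝ᵥ K t) := by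
        rw [Matrix.neg_mulVec, dotProduct_neg, Matrix.dotProduct_mulVec,
          Matrix.vecMul_transpose]
      rw [e1, e2, dotProduct_comm (Dpx *ᵥ a), dotProduct_comm (Dpy *ᵥ b)]
      ring
    rw [hzero] at hsum
    exact hsum
  intro t₁ t₂
  exact is_const_of_deriv_eq_zero (fun t => (key t).differentiableAt)
    (fun t => (key t).deriv) t₁ t₂
end

section
/- Let g, h, u be real numbers with g > 0, h > 0 and u < √(gh), and set c = √(gh). Then the nonlinear transmissive boundary expression at x = 0 satisfies the factorization u·h + √(h/g)·((c − u/2)/(c − u))·(u²/2 + g·h) = h·(u + 2c)·(2c² − u²)/(4c(c − u)). In particular, if u + 2√(gh) = 0 then u·h + √(h/g)·((√(gh) − u/2)/(√(gh) − u))·(u²/2 + g·h) = 0, i.e. the nonlinear transmissive boundary condition F₁ + α₂F₂ = 0 holds whenever the incoming nonlinear Riemann invariant u + 2√(gh) vanishes. -/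
/-- Factorization of the nonlinear transmissive boundary expression at `x = 0`:
with `c = √(gh)`, `F₁ = uh`, `F₂ = u²/2 + gh` and
`α₂ = √(h/g)(c − u/2)/(c − u)`, one has
`F₁ + α₂ F₂ = h (u + 2c)(2c² − u²)/(4c(c − u))`; in particular the transmissive
boundary condition `F₁ + α₂ F₂ = 0` holds whenever the incoming nonlinear Riemann
invariant `u + 2√(gh)` vanishes. -/
theorem stmt18 (g h u : ℝ) (hg : 0 < g) (hh : 0 < h)
    (hu : u < Real.sqrt (g*h)) (c : ℝ) (hc : c = Real.sqrt (g*h)) :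
    (u*h + Real.sqrt (h/g) * ((c - u/2)/(c - u)) * (u^2/2 + g*h)
        = h * (u + 2*c) * (2*c^2 - u^2) / (4*c*(c - u))) ∧
    (u + 2*Real.sqrt (g*h) = 0 →
      u*h + Real.sqrt (h/g) * ((Real.sqrt (g*h) - u/2)/(Real.sqrt (g*h) - u))
        * (u^2/2 + g*h) = 0) := by
  have hgh : 0 < g * h := mul_pos hg hh
  have hc0 : 0 < c := hc ▸ Real.sqrt_pos.mpr hgh
  have hlt : u < c := by rw [hc]; exact hu
  have hcu : c - u ≠ 0 := sub_ne_zero.mpr hlt.ne'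
  have hsq : c ^ 2 = g * h := by rw [hc, sq, Real.mul_self_sqrt hgh.le]
  have hmul : Real.sqrt (h / g) * c = h := by
    rw [hc, ← Real.sqrt_mul (by positivity),
      show h / g * (g * h) = h ^ 2 by field_simp, Real.sqrt_sq hh.le]
  have hrt : Real.sqrt (h / g) = h / c := eq_div_of_mul_eq hc0.ne' hmul
  have main : u*h + Real.sqrt (h/g) * ((c - u/2)/(c - u)) * (u^2/2 + g*h)
      = h * (u + 2*c) * (2*c^2 - u^2) / (4*c*(c - u)) := by
    rw [hrt, ← hsq]
    field_simp
    ring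
  refine ⟨main, fun h0 => ?_⟩
  rw [← hc] at h0 ⊢
  rw [main, show u + 2*c = 0 from h0]
  ring
end
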